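/- Let n be even and 1 ≤ s ≤ n/2, and let α = max over A ⊆ {1,…,n} with |A| ≥ s of |I_A|, where I_A = { v : |v| = n/2, 2·|v ∩ A| ≥ |A| + s }. Then the F-chromatic number of the generalized Kneser graph K(n, n/2, s) is at most (C(n, n/2) / α) · (1 + ln α). -/

import Mathlib

open Finset

variable {n s : ℕ}

/-- Frankl set. -/
def Fr (n s : ℕ) (A : Finset (Fin n)) : Finset (Finset (Fin n)) :=
  Finset.univ.filter (fun v : Finset (Fin n) =>
    v.card = n / 2 ∧ A.card + s ≤ 2 * (v ∩ A).card)

lemma mem_Fr {A v : Finset (Fin n)} :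
    v ∈ Fr n s A ↔ v.card = n / 2 ∧ A.card + s ≤ 2 * (v ∩ A).card := by
  simp [Fr]

lemma Fr_perm (A v : Finset (Fin n)) (σ : Equiv.Perm (Fin n)) :
    v ∈ Fr n s (A.image σ) ↔ v.image σ.symm ∈ Fr n s A := by
  have hA : (A.image σ).card = A.card := Finset.card_image_of_injective _ σ.injective
  have hv : (v.image σ.symm).card = v.card := Finset.card_image_of_injective _ σ.symm.injective
  have hint : (v.image σ.symm ∩ A).card = (v ∩ A.image σ).card := by
    have : v.image σ.symm ∩ A = (v ∩ A.image σ).image σ.symm := by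
      rw [Finset.image_inter _ _ σ.symm.injective]
      congr 1
      rw [Finset.image_image]
      simp
    rw [this, Finset.card_image_of_injective _ σ.symm.injective]
  rw [mem_Fr, mem_Fr, hA, hv, hint]

/-- a permutation mapping one finset onto another of the same card -/
lemma exists_perm_image (u v : Finset (Fin n)) (h : u.card = v.card) :
    ∃ σ : Equiv.Perm (Fin n), u.image σ = v := by
  have hcard : Fintype.card {x // x ∈ u} = Fintype.card {x // x ∈ v} := by
    simp [Fintype.card_coe, h]
  obtain ⟨e⟩ := Fintype.card_eq.mp hcard
  classical
  refine ⟨e.extendSubtype, ?_⟩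
  apply Finset.eq_of_subset_of_card_le
  · intro y hy
    obtain ⟨x, hx, rfl⟩ := Finset.mem_image.mp hy
    exact e.extendSubtype_mem x hx
  · rw [Finset.card_image_of_injective _ (Equiv.injective _), h]

/-- fiber of the map `σ ↦ v.image σ.symm` -/
def fib (n : ℕ) (v u : Finset (Fin n)) : Finset (Equiv.Perm (Fin n)) :=
  Finset.univ.filter (fun σ => v.image σ.symm = u)

lemma fib_card_left (v u u' : Finset (Fin n)) (h : u.card = u'.card) :
    (fib n v u).card = (fib n v u').card := by
  obtain ⟨ρ, hρ⟩ := exists_perm_image u u' h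
  refine Finset.card_bij' (fun σ _ => ρ.symm.trans σ) (fun σ _ => ρ.trans σ) ?_ ?_ ?_ ?_
  · intro σ hσ
    simp only [fib, Finset.mem_filter, Finset.mem_univ, true_and] at hσ ⊢
    have : (ρ.symm.trans σ).symm = σ.symm.trans ρ := by ext x; simp
    rw [this]
    have : v.image (σ.symm.trans ρ) = (v.image σ.symm).image ρ := by
      rw [Finset.image_image]; rfl
    rw [this, hσ, hρ]
  · intro σ hσ
    simp only [fib, Finset.mem_filter, Finset.mem_univ, true_and] at hσ ⊢
    have : (ρ.trans σ).symm = σ.symm.trans ρ.symm := by ext x; simp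
    rw [this]
    have : v.image (σ.symm.trans ρ.symm) = (v.image σ.symm).image ρ.symm := by
      rw [Finset.image_image]; rfl
    rw [this, hσ, ← hρ, Finset.image_image]
    simp
  · intro σ _; ext x; simp
  · intro σ _; ext x; simp

lemma fib_card_right (v v' u : Finset (Fin n)) (h : v.card = v'.card) :
    (fib n v u).card = (fib n v' u).card := by
  obtain ⟨τ, hτ⟩ := exists_perm_image v' v h.symm
  refine Finset.card_bij' (fun σ _ => σ.trans τ.symm) (fun σ _ => σ.trans τ) ?_ ?_ ?_ ?_
  · intro σ hσ
    simp only [fib, Finset.mem_filter, Finset.mem_univ, true_and] at hσ ⊢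
    have : (σ.trans τ.symm).symm = τ.trans σ.symm := by ext x; simp
    rw [this]
    have : v'.image (τ.trans σ.symm) = (v'.image τ).image σ.symm := by
      rw [Finset.image_image]; rfl
    rw [this, hτ, hσ]
  · intro σ hσ
    simp only [fib, Finset.mem_filter, Finset.mem_univ, true_and] at hσ ⊢
    have h1 : (σ.trans τ).symm = τ.symm.trans σ.symm := by ext x; simp
    have h2 : v.image ⇑(τ.symm.trans σ.symm) = (v.image τ.symm).image σ.symm := by
      rw [Finset.image_image]; rfl
    have h3 : v.image τ.symm = v' := by
      rw [← hτ, Finset.image_image]; simp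
    rw [h1, h2, h3]
    exact hσ
  · intro σ _; ext x; simp
  · intro σ _; ext x; simp

lemma fib_card_const (v u v' u' : Finset (Fin n)) (hv : v.card = v'.card)
    (hu : u.card = u'.card) (hvu : v.card = u.card) :
    (fib n v u).card = (fib n v' u').card := by
  rw [fib_card_left v u u' hu, fib_card_right v v' u' hv]

lemma fib_nonempty (v u : Finset (Fin n)) (h : v.card = u.card) :
    (fib n v u).Nonempty := by
  obtain ⟨σ, hσ⟩ := exists_perm_image v u h
  exact ⟨σ.symm, by simp [fib, hσ]⟩

lemma card_filter_mem (v : Finset (Fin n)) (S : Finset (Finset (Fin n))) :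
    (Finset.univ.filter (fun σ : Equiv.Perm (Fin n) => v.image σ.symm ∈ S)).card
      = ∑ u ∈ S, (fib n v u).card := by
  rw [Finset.card_eq_sum_card_fiberwise (f := fun σ : Equiv.Perm (Fin n) => v.image σ.symm)
    (s := Finset.univ.filter (fun σ : Equiv.Perm (Fin n) => v.image σ.symm ∈ S))
    (t := S) (fun σ hσ => (Finset.mem_filter.mp hσ).2)]
  refine Finset.sum_congr rfl (fun u hu => ?_)
  congr 1
  rw [Finset.filter_filter]
  ext σ
  simp only [fib, Finset.mem_filter, Finset.mem_univ, true_and]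
  exact ⟨fun h => h.2, fun h => ⟨h ▸ hu, h⟩⟩

lemma harm_nonneg (m : ℕ) : (0:ℝ) ≤ (harmonic m : ℝ) := by
  rcases Nat.eq_zero_or_pos m with h | h
  · simp [h, harmonic]
  · exact_mod_cast (harmonic_pos h.ne').le

lemma harm_diff {a' a : ℕ} (h : a' ≤ a) (ha : 0 < a) :
    ((a - a' : ℕ) : ℝ) / (a : ℝ) ≤ (harmonic a : ℝ) - (harmonic a' : ℝ) := by
  have key : (harmonic a : ℝ) - (harmonic a' : ℝ)
      = ∑ i ∈ Finset.Ico a' a, ((i : ℝ) + 1)⁻¹ := by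
    have : ∀ m : ℕ, (harmonic m : ℝ) = ∑ i ∈ Finset.range m, ((i : ℝ) + 1)⁻¹ := by
      intro m
      rw [harmonic]
      push_cast
      rfl
    rw [this, this, Finset.sum_Ico_eq_sub _ h]
  rw [key]
  have : ∀ i ∈ Finset.Ico a' a, (a : ℝ)⁻¹ ≤ ((i : ℝ) + 1)⁻¹ := by
    intro i hi
    rw [Finset.mem_Ico] at hi
    have hia : (i : ℝ) + 1 ≤ (a : ℝ) := by exact_mod_cast Nat.succ_le_of_lt hi.2
    exact inv_anti₀ (by positivity) hia
  calc ((a - a' : ℕ) : ℝ) / (a : ℝ) = (Finset.Ico a' a).card * (a : ℝ)⁻¹ := by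
        rw [Nat.card_Ico, div_eq_mul_inv]
      _ = ∑ _i ∈ Finset.Ico a' a, (a : ℝ)⁻¹ := by rw [Finset.sum_const, nsmul_eq_mul]
      _ ≤ ∑ i ∈ Finset.Ico a' a, ((i : ℝ) + 1)⁻¹ := Finset.sum_le_sum this

lemma greedy_cover (n s : ℕ) (hs : 1 ≤ s) (hsn : s ≤ n / 2) :
    ∀ (m : ℕ) (W : Finset (Finset (Fin n))), W.card ≤ m → (∀ v ∈ W, v.card = n / 2) →
    ∃ (L : List (Finset (Fin n))) (ch : Finset (Fin n) → ℝ),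
      (∀ A ∈ L, s ≤ A.card) ∧
      (∀ v ∈ W, ∃ A ∈ L, A.card + s ≤ 2 * (v ∩ A).card) ∧
      ((L.length : ℝ) = ∑ v ∈ W, ch v) ∧
      (∀ B : Finset (Fin n), s ≤ B.card →
        ∑ v ∈ Fr n s B ∩ W, ch v ≤ (harmonic ((Fr n s B ∩ W).card) : ℝ)) := by
  intro m
  induction m with
  | zero =>
    intro W hW _
    have : W = ∅ := Finset.card_eq_zero.mp (Nat.le_zero.mp hW)
    subst this
    exact ⟨[], fun _ => 0, by simp, by simp, by simp, by simp [harm_nonneg]⟩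
  | succ m ih =>
    intro W hW hWV
    rcases Finset.eq_empty_or_nonempty W with rfl | hWne
    · exact ⟨[], fun _ => 0, by simp, by simp, by simp, by simp [harm_nonneg]⟩
    -- pick the maximizing Frankl set
    have hD : (Finset.univ.filter (fun B : Finset (Fin n) => s ≤ B.card)).Nonempty := by
      refine ⟨Finset.univ, ?_⟩
      simp only [Finset.mem_filter, Finset.mem_univ, true_and, Finset.card_univ,
        Fintype.card_fin]
      exact hsn.trans (Nat.div_le_self n 2)
    obtain ⟨Am, hAm, hmax⟩ := Finset.exists_max_image _
      (fun B => (Fr n s B ∩ W).card) hD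
    rw [Finset.mem_filter] at hAm
    have hAms : s ≤ Am.card := hAm.2
    set k := (Fr n s Am ∩ W).card with hk
    -- k ≥ 1
    obtain ⟨v0, hv0⟩ := hWne
    have hv0c : v0.card = n / 2 := hWV v0 hv0
    obtain ⟨B0, hB0sub, hB0c⟩ := Finset.exists_subset_card_eq (s := v0) (n := s) (hv0c ▸ hsn)
    have hv0B0 : v0 ∈ Fr n s B0 := by
      rw [mem_Fr, hB0c, Finset.inter_eq_right.mpr hB0sub, hB0c]
      exact ⟨hv0c, by omega⟩
    have hk1 : 1 ≤ k := by
      have h1 : 1 ≤ (Fr n s B0 ∩ W).card :=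
        Finset.card_pos.mpr ⟨v0, Finset.mem_inter.mpr ⟨hv0B0, hv0⟩⟩
      have h2 := hmax B0 (by simp [hB0c])
      omega
    -- recurse
    set W' := W \ Fr n s Am with hW'
    have hW'card : W'.card ≤ m := by
      obtain ⟨w, hw⟩ := Finset.card_pos.mp (by omega : 0 < k)
      rw [Finset.mem_inter] at hw
      have hsub : W' ⊂ W := by
        refine Finset.ssubset_iff_of_subset (Finset.sdiff_subset) |>.mpr ?_
        exact ⟨w, hw.2, fun hcon => (Finset.mem_sdiff.mp hcon).2 hw.1⟩
      have := Finset.card_lt_card hsub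
      omega
    obtain ⟨L', ch', hL's, hL'cov, hL'len, hL'set⟩ := ih W' hW'card
      (fun v hv => hWV v (Finset.mem_sdiff.mp hv).1)
    refine ⟨Am :: L', fun v => if v ∈ Fr n s Am then (k : ℝ)⁻¹ else ch' v, ?_, ?_, ?_, ?_⟩
    · intro A hA
      rcases List.mem_cons.mp hA with rfl | hA
      · exact hAms
      · exact hL's A hA
    · intro v hv
      by_cases hvF : v ∈ Fr n s Am
      · exact ⟨Am, List.mem_cons_self, (mem_Fr.mp hvF).2⟩
      · obtain ⟨A, hA, hineq⟩ := hL'cov v (Finset.mem_sdiff.mpr ⟨hv, hvF⟩)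
        exact ⟨A, List.mem_cons_of_mem _ hA, hineq⟩
    · -- length equation
      have hsplit : ∑ v ∈ W, (if v ∈ Fr n s Am then (k : ℝ)⁻¹ else ch' v)
          = ∑ v ∈ W ∩ Fr n s Am, (if v ∈ Fr n s Am then (k : ℝ)⁻¹ else ch' v)
            + ∑ v ∈ W', (if v ∈ Fr n s Am then (k : ℝ)⁻¹ else ch' v) :=
        (Finset.sum_inter_add_sum_sdiff _ _ _).symm
      rw [hsplit]
      have h1 : ∑ v ∈ W ∩ Fr n s Am, (if v ∈ Fr n s Am then (k : ℝ)⁻¹ else ch' v)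
          = (W ∩ Fr n s Am).card * (k : ℝ)⁻¹ := by
        rw [Finset.sum_congr rfl (fun v hv => if_pos (Finset.mem_inter.mp hv).2)]
        rw [Finset.sum_const, nsmul_eq_mul]
      have h2 : ∑ v ∈ W', (if v ∈ Fr n s Am then (k : ℝ)⁻¹ else ch' v)
          = ∑ v ∈ W', ch' v := by
        refine Finset.sum_congr rfl (fun v hv => if_neg (Finset.mem_sdiff.mp hv).2)
      rw [h1, h2, ← hL'len]
      have : (W ∩ Fr n s Am).card = k := by rw [hk, Finset.inter_comm]
      rw [this]
      have hkne : (k : ℝ) ≠ 0 := by exact_mod_cast (by omega : k ≠ 0)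
      rw [List.length_cons]
      push_cast
      field_simp
      ring
    · -- per-set bound
      intro B hB
      have hsplit : Fr n s B ∩ W = (Fr n s B ∩ W ∩ Fr n s Am) ∪ (Fr n s B ∩ W') := by
        rw [hW']
        ext v
        simp only [Finset.mem_inter, Finset.mem_union, Finset.mem_sdiff]
        tauto
      have hdisj : Disjoint (Fr n s B ∩ W ∩ Fr n s Am) (Fr n s B ∩ W') := by
        rw [hW']
        refine Finset.disjoint_left.mpr ?_
        intro v hv1 hv2
        simp only [Finset.mem_inter, Finset.mem_sdiff] at hv1 hv2
        exact hv2.2.2 hv1.2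
      set a := (Fr n s B ∩ W).card
      set a' := (Fr n s B ∩ W').card with ha'
      set d := (Fr n s B ∩ W ∩ Fr n s Am).card with hd
      have hcard : a = d + a' := by
        rw [show a = ((Fr n s B ∩ W ∩ Fr n s Am) ∪ (Fr n s B ∩ W')).card from by rw [← hsplit],
          Finset.card_union_of_disjoint hdisj]
      have hka : a ≤ k := hmax B (by simp [hB])
      have hsum : ∑ v ∈ Fr n s B ∩ W, (if v ∈ Fr n s Am then (k : ℝ)⁻¹ else ch' v)
          = ∑ v ∈ Fr n s B ∩ W ∩ Fr n s Am, (if v ∈ Fr n s Am then (k : ℝ)⁻¹ else ch' v)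
            + ∑ v ∈ Fr n s B ∩ W', (if v ∈ Fr n s Am then (k : ℝ)⁻¹ else ch' v) := by
        nth_rewrite 1 [hsplit]
        rw [Finset.sum_union hdisj]
      rw [hsum]
      have h1 : ∑ v ∈ Fr n s B ∩ W ∩ Fr n s Am, (if v ∈ Fr n s Am then (k : ℝ)⁻¹ else ch' v)
          = (d : ℝ) * (k : ℝ)⁻¹ := by
        rw [Finset.sum_congr rfl (fun v hv => if_pos (Finset.mem_inter.mp hv).2),
          Finset.sum_const, nsmul_eq_mul]
      have h2 : ∑ v ∈ Fr n s B ∩ W', (if v ∈ Fr n s Am then (k : ℝ)⁻¹ else ch' v)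
          = ∑ v ∈ Fr n s B ∩ W', ch' v := by
        refine Finset.sum_congr rfl (fun v hv => if_neg ?_)
        have := (Finset.mem_inter.mp hv).2
        exact fun hcon => (Finset.mem_sdiff.mp this).2 hcon
      rw [h1, h2]
      have hIH := hL'set B hB
      rw [← ha'] at hIH
      rcases Nat.eq_zero_or_pos a with haz | hapos
      · have hd0 : d = 0 := by omega
        have e1 : (d : ℝ) * (k : ℝ)⁻¹ = 0 := by rw [hd0]; simp
        have e2 : (harmonic a' : ℝ) = (harmonic a : ℝ) := by
          rw [show a' = a from by omega]
        linarith
      · have step1 : (d : ℝ) * (k : ℝ)⁻¹ ≤ (d : ℝ) / (a : ℝ) := by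
          rw [div_eq_mul_inv]
          refine mul_le_mul_of_nonneg_left ?_ (Nat.cast_nonneg d)
          exact inv_anti₀ (by exact_mod_cast hapos) (by exact_mod_cast hka)
        have step2 : (d : ℝ) / (a : ℝ) ≤ (harmonic a : ℝ) - (harmonic a' : ℝ) := by
          have h := harm_diff (by omega : a' ≤ a) hapos
          rw [show a - a' = d from by omega] at h
          exact h
        linarith

lemma Fr_card_image {n s : ℕ} (A : Finset (Fin n)) (σ : Equiv.Perm (Fin n)) :
    (Fr n s (A.image σ)).card = (Fr n s A).card := by
  refine Finset.card_bij' (fun u _ => u.image σ.symm) (fun u _ => u.image σ) ?_ ?_ ?_ ?_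
  · intro u hu
    exact (Fr_perm A u σ).mp hu
  · intro u hu
    refine (Fr_perm A (u.image σ) σ).mpr ?_
    rw [Finset.image_image]
    simpa using hu
  · intro u _
    ext x
    simp
  · intro u _
    ext x
    simp

theorem fChromatic_le_fractional (n s α : ℕ) (hn : Even n) (hs : 1 ≤ s) (hsn : s ≤ n / 2)
    (hα : IsGreatest {k : ℕ | ∃ A : Finset (Fin n), s ≤ A.card ∧
      k = (Finset.univ.filter (fun v : Finset (Fin n) =>
            v.card = n / 2 ∧ A.card + s ≤ 2 * (v ∩ A).card)).card} α) :
    ∃ (q : ℕ) (A : Fin q → Finset (Fin n)),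
      (q : ℝ) ≤ ((Nat.choose n (n / 2) : ℝ) / (α : ℝ)) * (1 + Real.log (α : ℝ)) ∧
      (∀ i, s ≤ (A i).card) ∧
      ∀ v : Finset (Fin n), v.card = n / 2 →
        ∃ i, (A i).card + s ≤ 2 * (v ∩ A i).card := by
  classical
  obtain ⟨⟨Astar, hAs, hAcard⟩, hub⟩ := hα
  have hAcard' : α = (Fr n s Astar).card := hAcard
  set N := Nat.choose n (n / 2) with hN
  set V := Finset.univ.filter (fun v : Finset (Fin n) => v.card = n / 2) with hV
  have hVcard : V.card = N := by
    rw [hV, hN]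
    have : Finset.univ.filter (fun v : Finset (Fin n) => v.card = n / 2)
        = Finset.powersetCard (n / 2) Finset.univ := by
      ext v
      simp [Finset.mem_powersetCard]
    rw [this, Finset.card_powersetCard, Finset.card_univ, Fintype.card_fin]
  -- α ≥ 1
  obtain ⟨B1, _, hB1c⟩ := Finset.exists_subset_card_eq (s := (Finset.univ : Finset (Fin n))) (n := s)
    (by rw [Finset.card_univ, Fintype.card_fin]; exact hsn.trans (Nat.div_le_self n 2))
  obtain ⟨v1, hv1sub, hv1c⟩ := Finset.exists_superset_card_eq (n := n / 2)
    (s := B1) (by omega) (by rw [Fintype.card_fin]; exact Nat.div_le_self n 2)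
  have hv1F : v1 ∈ Fr n s B1 := by
    rw [mem_Fr, hB1c, Finset.inter_eq_right.mpr hv1sub, hB1c]
    exact ⟨hv1c, by omega⟩
  have hα1 : 1 ≤ α := by
    have h1 : 1 ≤ (Fr n s B1).card := Finset.card_pos.mpr ⟨v1, hv1F⟩
    have h2 : (Fr n s B1).card ≤ α := hub ⟨B1, by omega, rfl⟩
    omega
  -- Fr sets are inside V
  have hFrV : ∀ A : Finset (Fin n), Fr n s A ∩ V = Fr n s A := by
    intro A
    refine Finset.inter_eq_left.mpr ?_
    intro v hv
    rw [hV, Finset.mem_filter]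
    exact ⟨Finset.mem_univ v, (mem_Fr.mp hv).1⟩
  -- greedy cover of V
  obtain ⟨L, ch, hLs, hLcov, hLlen, hLset⟩ := greedy_cover n s hs hsn V.card V le_rfl
    (fun v hv => (Finset.mem_filter.mp hv).2)
  -- counting constant
  obtain ⟨u1, hu1⟩ := Finset.card_pos.mp (show 0 < (Fr n s Astar).card by omega)
  have hu1c : u1.card = n / 2 := (mem_Fr.mp hu1).1
  set c := (fib n u1 u1).card with hc
  have hc1 : 0 < c := Finset.card_pos.mpr (fib_nonempty u1 u1 rfl)
  have hcount : ∀ w ∈ V,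
      (Finset.univ.filter (fun σ : Equiv.Perm (Fin n) =>
        w ∈ Fr n s (Astar.image σ))).card = α * c := by
    intro w hw
    have hwc : w.card = n / 2 := (Finset.mem_filter.mp hw).2
    have h1 : (Finset.univ.filter (fun σ : Equiv.Perm (Fin n) =>
        w ∈ Fr n s (Astar.image σ)))
        = Finset.univ.filter (fun σ : Equiv.Perm (Fin n) =>
            w.image σ.symm ∈ Fr n s Astar) := by
      ext σ
      simp [Fr_perm]
    rw [h1, card_filter_mem w (Fr n s Astar),
      Finset.sum_congr rfl (fun u hu => fib_card_const w u u1 u1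
        (hwc.trans hu1c.symm) ((mem_Fr.mp hu).1.trans hu1c.symm)
        (hwc.trans ((mem_Fr.mp hu).1).symm)),
      Finset.sum_const, smul_eq_mul, ← hAcard']
  have hperm : Fintype.card (Equiv.Perm (Fin n)) = N * c := by
    have hmemV : ∀ σ : Equiv.Perm (Fin n), u1.image σ.symm ∈ V := by
      intro σ
      rw [hV, Finset.mem_filter]
      exact ⟨Finset.mem_univ _,
        by rw [Finset.card_image_of_injective _ (Equiv.injective _), hu1c]⟩
    have h1 : (Finset.univ : Finset (Equiv.Perm (Fin n)))
        = Finset.univ.filter (fun σ : Equiv.Perm (Fin n) => u1.image σ.symm ∈ V) := by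
      ext σ
      simp [hmemV σ]
    rw [← Finset.card_univ, h1, card_filter_mem u1 V,
      Finset.sum_congr rfl (fun u hu => fib_card_const u1 u u1 u1 rfl
        (((Finset.mem_filter.mp hu).2).trans hu1c.symm) (hu1c.trans ((Finset.mem_filter.mp hu).2).symm)),
      Finset.sum_const, smul_eq_mul, hVcard]
  -- the key averaging inequality
  have hFrcard : ∀ σ : Equiv.Perm (Fin n), (Fr n s (Astar.image σ)).card = α := by
    intro σ
    rw [Fr_card_image, ← hAcard']
  have key : ((α : ℝ) * c) * L.length ≤ ((N : ℝ) * c) * (harmonic α : ℝ) := by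
    have upper : ∑ σ : Equiv.Perm (Fin n), ∑ v ∈ Fr n s (Astar.image σ), ch v
        ≤ ((N : ℝ) * c) * (harmonic α : ℝ) := by
      have hterm : ∀ σ : Equiv.Perm (Fin n),
          ∑ v ∈ Fr n s (Astar.image σ), ch v ≤ (harmonic α : ℝ) := by
        intro σ
        have hcardim : s ≤ (Astar.image σ).card := by
          rw [Finset.card_image_of_injective _ (Equiv.injective _)]; exact hAs
        have := hLset (Astar.image σ) hcardim
        rw [hFrV, hFrcard] at this
        exact this
      calc ∑ σ : Equiv.Perm (Fin n), ∑ v ∈ Fr n s (Astar.image σ), ch v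
          ≤ ∑ _σ : Equiv.Perm (Fin n), (harmonic α : ℝ) :=
            Finset.sum_le_sum (fun σ _ => hterm σ)
        _ = (Fintype.card (Equiv.Perm (Fin n)) : ℝ) * (harmonic α : ℝ) := by
            rw [Finset.sum_const, nsmul_eq_mul, Finset.card_univ]
        _ = ((N : ℝ) * c) * (harmonic α : ℝ) := by rw [hperm]; push_cast; ring
    have equal : ∑ σ : Equiv.Perm (Fin n), ∑ v ∈ Fr n s (Astar.image σ), ch v
        = ((α : ℝ) * c) * L.length := by
      have h1 : ∀ σ : Equiv.Perm (Fin n), ∑ v ∈ Fr n s (Astar.image σ), ch v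
          = ∑ v ∈ V, (if v ∈ Fr n s (Astar.image σ) then ch v else 0) := by
        intro σ
        rw [Finset.sum_ite_mem, Finset.inter_comm, hFrV]
      rw [Finset.sum_congr rfl (fun σ _ => h1 σ), Finset.sum_comm]
      have h2 : ∀ w ∈ V, ∑ σ : Equiv.Perm (Fin n),
          (if w ∈ Fr n s (Astar.image σ) then ch w else 0) = ((α : ℝ) * c) * ch w := by
        intro w hw
        rw [← Finset.sum_filter, Finset.sum_const, nsmul_eq_mul, hcount w hw]
        push_cast
        ring
      rw [Finset.sum_congr rfl h2, ← Finset.mul_sum, ← hLlen]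
    rw [← equal]
    exact upper
  -- conclude
  have hαR : (0:ℝ) < (α : ℝ) := by exact_mod_cast hα1
  have hcR : (0:ℝ) < (c : ℝ) := by exact_mod_cast hc1
  have key2 : ((L.length : ℝ) * (α : ℝ)) * (c : ℝ)
      ≤ ((N : ℝ) * (harmonic α : ℝ)) * (c : ℝ) := by
    have e1 : ((L.length : ℝ) * (α : ℝ)) * (c : ℝ) = ((α : ℝ) * c) * L.length := by ring
    have e2 : ((N : ℝ) * (harmonic α : ℝ)) * (c : ℝ) = ((N : ℝ) * c) * (harmonic α : ℝ) := by
      ring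
    rw [e1, e2]
    exact key
  have hq1 : (L.length : ℝ) * (α : ℝ) ≤ (N : ℝ) * (harmonic α : ℝ) :=
    le_of_mul_le_mul_right key2 hcR
  have hq2 : (L.length : ℝ) ≤ (N : ℝ) / (α : ℝ) * (harmonic α : ℝ) := by
    rw [div_mul_eq_mul_div, le_div_iff₀ hαR]
    linarith
  have hq3 : (N : ℝ) / (α : ℝ) * (harmonic α : ℝ)
      ≤ (N : ℝ) / (α : ℝ) * (1 + Real.log (α : ℝ)) :=
    mul_le_mul_of_nonneg_left (harmonic_le_one_add_log α) (by positivity)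
  refine ⟨L.length, fun i => L.get i, hq2.trans hq3, ?_, ?_⟩
  · intro i
    exact hLs _ (L.get_mem i)
  · intro v hv
    have hvV : v ∈ V := by
      rw [hV, Finset.mem_filter]
      exact ⟨Finset.mem_univ v, hv⟩
    obtain ⟨A, hAL, hineq⟩ := hLcov v hvV
    obtain ⟨i, hi⟩ := List.mem_iff_get.mp hAL
    rw [← hi] at hineq
    exact ⟨i, hineq⟩
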